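/- Let λ ∈ P⁺ be nonzero and ξ = (ξ^α)_{α∈R⁺} a λ-compatible tuple of partitions. If α ∈ R⁺ satisfies |ξ^α| > 0 and s_α is the number of nonzero parts of ξ^α, then (x_α⁻ ⊗ t^p) v_ξ = 0 for all p ≥ s_α. -/

import Mathlib

open scoped TensorProduct
open Polynomial

noncomputable section

/-! ## The current algebra `𝔤[t] = ℂ[t] ⊗ 𝔤` and its universal enveloping algebra -/

variable (L : Type) [LieRing L] [LieAlgebra ℂ L]

/-- The current algebra `𝔤[t] = ℂ[t] ⊗ 𝔤` of a complex Lie algebra `𝔤`. -/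
abbrev CurAlg := Polynomial ℂ ⊗[ℂ] L

instance : LieAlgebra ℂ (CurAlg L) where
  lie_smul c x y := by
    have h := lie_smul (algebraMap ℂ (Polynomial ℂ) c) x y
    rwa [algebraMap_smul, algebraMap_smul] at h

/-- The universal enveloping algebra `U(𝔤[t])`. -/
abbrev UCA := UniversalEnvelopingAlgebra ℂ (CurAlg L)

attribute [local instance 100] LieRing.ofAssociativeRing

/-- The canonical embedding `𝔤[t] → U(𝔤[t])`. -/
abbrev ιU : CurAlg L →ₗ⁅ℂ⁆ UCA L := UniversalEnvelopingAlgebra.ι ℂ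

variable {L}

/-- The element `x ⊗ t^s` of `U(𝔤[t])`. -/
abbrev xt (x : L) (s : ℕ) : UCA L := ιU L ((X ^ s : ℂ[X]) ⊗ₜ x)

/-- Divided power `u^{(q)} = u^q/q!`. -/
def dpow (u : UCA L) (q : ℕ) : UCA L := (q.factorial : ℂ)⁻¹ • u ^ q

/-! ## Root data for `𝔤`, the local Weyl module and the modules `V(ξ)`.

`Φ` indexes the positive roots `R⁺`; `ep α`, `em α`, `hc α` are the elements
`x_α⁺ ∈ 𝔤_α`, `x_α⁻ ∈ 𝔤_{-α}` and the coroot `h_α`; `ιI` indexes the simple roots via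
`simple : ιI → Φ`.  The functional `lam` is the weight `λ` and `lamNat α = λ(h_α) ∈ ℤ≥0`. -/

variable {Φ ιI : Type}

/-- The nilpotent subalgebra `𝔫⁺`, namely the span of the positive root vectors. -/
def posPart (ep : Φ → L) : Submodule ℂ L := Submodule.span ℂ (Set.range ep)

/-- The Cartan subalgebra `𝔥`, namely the span of the coroots. -/
def cartan (hc : Φ → L) : Submodule ℂ L := Submodule.span ℂ (Set.range hc)

/-- The generators of the defining left ideal of the local Weyl module `W_loc(λ)`. -/
def weylGens (ep em hc : Φ → L) (simple : ιI → Φ) (lam : Module.Dual ℂ L)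
    (lamNat : Φ → ℕ) : Set (UCA L) :=
  {u | ∃ x ∈ posPart ep, ∃ s : ℕ, u = xt x s} ∪
    {u | ∃ x ∈ cartan hc, ∃ s : ℕ, u = xt x s - (if s = 0 then lam x else 0) • 1} ∪
    {u | ∃ i : ιI, u = xt (em (simple i)) 0 ^ (lamNat (simple i) + 1)}

/-- The local Weyl module `W_loc(λ)`, as quotient of `U(𝔤[t])` by the left ideal generated by
the elements `x ⊗ t^s` for `x ∈ 𝔫⁺`, `h ⊗ t^s − δ_{s,0}λ(h)·1` for `h ∈ 𝔥`, and
`(x_i⁻ ⊗ 1)^{λ(h_i)+1}` for `i ∈ I`. -/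
abbrev Wloc (ep em hc : Φ → L) (simple : ιI → Φ) (lam : Module.Dual ℂ L) (lamNat : Φ → ℕ) :=
  (UCA L) ⧸ Submodule.span (UCA L) (weylGens ep em hc simple lam lamNat)

/-- The cyclic generator `w_λ` of `W_loc(λ)`, the image of `1`. -/
def wLam (ep em hc : Φ → L) (simple : ιI → Φ) (lam : Module.Dual ℂ L) (lamNat : Φ → ℕ) :
    Wloc ep em hc simple lam lamNat := Submodule.Quotient.mk 1

/-- The sum `Σ_{j ≥ k+1} ξ_j` of the parts of a partition beyond the `k`-th one (the partition
being recorded as the function `p : ℕ → ℕ` of its parts in `0`-based indexing, `p j = ξ_{j+1}`). -/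
def tailSum (p : ℕ → ℕ) (k : ℕ) : ℕ := ∑ᶠ j ∈ {j : ℕ | k ≤ j}, p j

/-- `ξ = (ξ^α)_{α ∈ R⁺}` is a `λ`-compatible tuple of partitions: each `ξ^α` is a partition
(weakly decreasing, finitely many nonzero parts) with `|ξ^α| = λ(h_α)`. -/
def IsCompatible (lamNat : Φ → ℕ) (ξ : Φ → ℕ → ℕ) : Prop :=
  ∀ α, Antitone (ξ α) ∧ (∃ N, ∀ j, N ≤ j → ξ α j = 0) ∧ ∑ᶠ j, ξ α j = lamNat α

/-- The generators `(x_α⁺ ⊗ t)^s (x_α⁻ ⊗ 1)^{s+r} w_λ`, for `α ∈ R⁺` and `s, r ≥ 1` such that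
`s + r ≥ 1 + rk + Σ_{j ≥ k+1} ξ^α_j` for some `k ≥ 1`, of the submodule of `W_loc(λ)` defining
`V(ξ)`. -/
def xiGens (ep em hc : Φ → L) (simple : ιI → Φ) (lam : Module.Dual ℂ L) (lamNat : Φ → ℕ)
    (ξ : Φ → ℕ → ℕ) : Set (Wloc ep em hc simple lam lamNat) :=
  {v | ∃ (α : Φ) (s r : ℕ), 1 ≤ s ∧ 1 ≤ r ∧
        (∃ k, 1 ≤ k ∧ s + r ≥ 1 + r * k + tailSum (ξ α) k) ∧
        v = (xt (ep α) 1 ^ s * xt (em α) 0 ^ (s + r)) • wLam ep em hc simple lam lamNat}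

/-- The module `V(ξ)`. -/
abbrev VXi (ep em hc : Φ → L) (simple : ιI → Φ) (lam : Module.Dual ℂ L) (lamNat : Φ → ℕ)
    (ξ : Φ → ℕ → ℕ) :=
  Wloc ep em hc simple lam lamNat ⧸
    Submodule.span (UCA L) (xiGens ep em hc simple lam lamNat ξ)

/-- The cyclic generator `v_ξ` of `V(ξ)`, the image of `w_λ`. -/
def vXi (ep em hc : Φ → L) (simple : ιI → Φ) (lam : Module.Dual ℂ L) (lamNat : Φ → ℕ)
    (ξ : Φ → ℕ → ℕ) : VXi ep em hc simple lam lamNat ξ :=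
  Submodule.Quotient.mk (wLam ep em hc simple lam lamNat)



/-! ### Auxiliary machinery for the proof -/

lemma xt_mul {L : Type} [LieRing L] [LieAlgebra ℂ L] (x y : L) (a b : ℕ) :
    xt x a * xt y b = xt y b * xt x a + xt ⁅x, y⁆ (a + b) := by
  have h := (ιU L).map_lie ((X ^ a : ℂ[X]) ⊗ₜ[ℂ] x) ((X ^ b : ℂ[X]) ⊗ₜ[ℂ] y)
  rw [LieAlgebra.ExtendScalars.bracket_tmul, ← pow_add, Ring.lie_def] at h
  have h2 : xt x a * xt y b - xt y b * xt x a = xt ⁅x, y⁆ (a + b) := h.symm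
  rw [← h2]; abel

lemma xt_add {L : Type} [LieRing L] [LieAlgebra ℂ L] (x y : L) (a : ℕ) :
    xt (x + y) a = xt x a + xt y a := by
  show (ιU L) ((X ^ a : ℂ[X]) ⊗ₜ (x + y)) = _
  rw [TensorProduct.tmul_add, map_add]

lemma xt_neg {L : Type} [LieRing L] [LieAlgebra ℂ L] (x : L) (a : ℕ) :
    xt (-x) a = - xt x a := by
  show (ιU L) ((X ^ a : ℂ[X]) ⊗ₜ (-x)) = _
  rw [TensorProduct.tmul_neg, map_neg]

lemma xt_zero' {L : Type} [LieRing L] [LieAlgebra ℂ L] (a : ℕ) :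
    xt (0 : L) a = 0 := by
  show (ιU L) ((X ^ a : ℂ[X]) ⊗ₜ (0 : L)) = _
  rw [TensorProduct.tmul_zero, map_zero]

/-- Nonnegative cone spanned by the "states" `v l m` with prescribed degree `j` and count `n`. -/
def stateCone {M : Type} [AddCommGroup M] [Module ℂ M]
    (v : List ℕ → ℕ → M) (j n : ℕ) : AddSubmonoid M :=
  AddSubmonoid.closure {u | ∃ t : ℝ, 0 ≤ t ∧ ∃ l mm, (∀ a ∈ l, 1 ≤ a) ∧ l.sum = j ∧
    l.length + mm = n ∧ u = (t : ℂ) • v l mm}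

section ConeLemmas
variable {M : Type} [AddCommGroup M] [Module ℂ M] {v : List ℕ → ℕ → M}

lemma stateCone.gen_mem {t : ℝ} (ht : 0 ≤ t) {l : List ℕ} {mm j n : ℕ}
    (h1 : ∀ a ∈ l, 1 ≤ a) (h2 : l.sum = j) (h3 : l.length + mm = n) :
    (t : ℂ) • v l mm ∈ stateCone v j n :=
  AddSubmonoid.subset_closure ⟨t, ht, l, mm, h1, h2, h3, rfl⟩

lemma stateCone.v_mem {l : List ℕ} {mm j n : ℕ}
    (h1 : ∀ a ∈ l, 1 ≤ a) (h2 : l.sum = j) (h3 : l.length + mm = n) :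
    v l mm ∈ stateCone v j n := by
  have h := stateCone.gen_mem (v := v) (t := 1) zero_le_one h1 h2 h3
  simpa using h

lemma stateCone.smul_mem {t : ℝ} (ht : 0 ≤ t) {j n : ℕ} {u : M}
    (hu : u ∈ stateCone v j n) : (t : ℂ) • u ∈ stateCone v j n := by
  induction hu using AddSubmonoid.closure_induction with
  | mem x hx =>
    obtain ⟨t', ht', l, mm, h1, h2, h3, rfl⟩ := hx
    rw [smul_smul, ← Complex.ofReal_mul]
    exact stateCone.gen_mem (mul_nonneg ht ht') h1 h2 h3
  | zero => simpa using (stateCone v j n).zero_mem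
  | add x y _ _ hx hy => rw [smul_add]; exact (stateCone v j n).add_mem hx hy

lemma stateCone.map_mem (T : M →ₗ[ℂ] M) {j n j' n' : ℕ}
    (hT : ∀ l mm, (∀ a ∈ l, 1 ≤ a) → l.sum = j → l.length + mm = n →
      T (v l mm) ∈ stateCone v j' n')
    {u : M} (hu : u ∈ stateCone v j n) : T u ∈ stateCone v j' n' := by
  induction hu using AddSubmonoid.closure_induction with
  | mem x hx =>
    obtain ⟨t', ht', l, mm, h1, h2, h3, rfl⟩ := hx
    rw [map_smul]
    exact stateCone.smul_mem ht' (hT l mm h1 h2 h3)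
  | zero => simpa using (stateCone v j' n').zero_mem
  | add x y _ _ hx hy => rw [map_add]; exact (stateCone v j' n').add_mem hx hy

end ConeLemmas

theorem core_lemma {A W : Type} [Ring A] [Algebra ℂ A] [AddCommGroup W] [Module ℂ W] [Module A W]
    [IsScalarTower ℂ A W] [SMulCommClass A ℂ W]
    (E : A) (Fb Hb : ℕ → A) (w : W)
    (h1 : ∀ b c, Hb b * Fb c = Fb c * Hb b - (Fb (b + c) + Fb (b + c)))
    (h2 : ∀ b, E * Fb b = Fb b * E + Hb (1 + b))
    (h3 : ∀ a b, Fb a * Fb b = Fb b * Fb a)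
    (h4 : ∀ s, 1 ≤ s → Hb s • w = 0)
    (h5 : E • w = 0)
    (p : ℕ) (hp : 1 ≤ p) :
    ∃ c : ℂ, Fb p • w = c • ((E ^ p * Fb 0 ^ (p + 1)) • w) := by
  obtain ⟨vst, hvst⟩ : ∃ v : List ℕ → ℕ → W,
      v = fun l mm => ((l.map Fb).prod * Fb 0 ^ mm) • w := ⟨_, rfl⟩
  have vst_nil : ∀ mm, vst [] mm = Fb 0 ^ mm • w := by intro mm; simp [hvst]
  have vst_cons : ∀ a l mm, vst (a :: l) mm = Fb a • vst l mm := by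
    intro a l mm; simp [hvst, mul_smul, mul_assoc]
  have hFprod : ∀ l : List ℕ, Fb 0 * (l.map Fb).prod = (l.map Fb).prod * Fb 0 := by
    intro l
    induction l with
    | nil => simp
    | cons a l ih =>
      simp only [List.map_cons, List.prod_cons, ← mul_assoc, h3 0 a]
      rw [mul_assoc, ih, mul_assoc]
  have F_vst : ∀ l mm, Fb 0 • vst l mm = vst l (mm + 1) := by
    intro l mm
    simp only [hvst, ← mul_smul]
    rw [← mul_assoc, hFprod, mul_assoc, ← pow_succ']
  have Fb_swap : ∀ a b l mm, Fb a • vst (b :: l) mm = vst (b :: a :: l) mm := by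
    intro a b l mm
    rw [vst_cons, vst_cons, vst_cons, ← mul_smul, h3 a b, mul_smul]
  -- `Fb a •` maps cones to cones
  have hFbmap : ∀ a, 1 ≤ a → ∀ j n j' n', j + a = j' → n + 1 = n' →
      ∀ u ∈ stateCone vst j n, Fb a • u ∈ stateCone vst j' n' := by
    intro a ha j n j' n' hj hn u hu
    have h := stateCone.map_mem (v := vst) (DistribMulAction.toLinearMap ℂ W (Fb a))
      (j := j) (n := n) (j' := j') (n' := n') ?_ hu
    · exact h
    · intro l mm hl hsum hcnt
      have he : (DistribMulAction.toLinearMap ℂ W (Fb a)) (vst l mm) = vst (a :: l) mm := by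
        simp [vst_cons]; rfl
      rw [he]
      refine stateCone.v_mem ?_ ?_ ?_
      · intro x hx
        rcases List.mem_cons.mp hx with rfl | hx
        · exact ha
        · exact hl x hx
      · simp only [List.sum_cons] <;> omega
      · simp only [List.length_cons] <;> omega
  -- exact computation of `Hb b` on states with no `Fb`-factors
  have HbF : ∀ b, 1 ≤ b → ∀ mm, Hb b • vst [] mm = (-(2 * (mm : ℂ))) • vst [b] (mm - 1) := by
    intro b hb mm
    induction mm with
    | zero =>
      have h0 : vst [] 0 = w := by rw [vst_nil]; simp
      rw [h0, h4 b hb]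
      simp
    | succ m ih =>
      have e1 : vst [] (m + 1) = Fb 0 • vst [] m := (F_vst [] m).symm
      have e2 : Hb b • (Fb 0 • vst [] m) =
          Fb 0 • (Hb b • vst [] m) - (vst [b] m + vst [b] m) := by
        rw [← mul_smul, h1 b 0, Nat.add_zero, sub_smul, add_smul, mul_smul,
          show Fb b • vst [] m = vst [b] m from (vst_cons b [] m).symm]
      rw [e1, e2, ih]
      cases m with
      | zero => simp; module
      | succ k =>
        rw [smul_comm (Fb 0), show (k+1) - 1 = k from rfl, F_vst [b] k]
        push_cast
        module
  -- exact computation of `E` on states with no `Fb`-factors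
  have Em : ∀ mm, E • vst [] mm = (-((mm : ℂ) * ((mm : ℂ) - 1))) • vst [1] (mm - 2) := by
    intro mm
    induction mm with
    | zero =>
      have h0 : vst [] 0 = w := by rw [vst_nil]; simp
      rw [h0, h5]
      simp
    | succ m ih =>
      have e1 : vst [] (m + 1) = Fb 0 • vst [] m := (F_vst [] m).symm
      have e2 : E • (Fb 0 • vst [] m) = Fb 0 • (E • vst [] m) + Hb 1 • vst [] m := by
        rw [← mul_smul, h2 0, add_smul, mul_smul]
      rw [e1, e2, ih, HbF 1 le_rfl m]
      match m with
      | 0 => simp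
      | 1 => norm_num
      | (k+2) =>
        rw [smul_comm (Fb 0), show (k+2) - 2 = k from rfl, F_vst [1] k]
        push_cast
        module
  -- `Hb b` on a general state: canonical term plus cone remainder
  have M1' : ∀ b, 1 ≤ b → ∀ l, (∀ a ∈ l, 1 ≤ a) → ∀ mm,
      ∃ r ∈ stateCone vst (l.sum + b) (l.length + mm),
        -(Hb b • vst l mm) = (2 * (mm : ℂ)) • vst (b :: l) (mm - 1) + r := by
    intro b hb l
    induction l with
    | nil =>
      intro _ mm
      refine ⟨0, zero_mem _, ?_⟩
      rw [HbF b hb mm, neg_smul, neg_neg, add_zero]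
    | cons a l ih =>
      intro hal mm
      have ha : 1 ≤ a := hal a (by simp)
      have hl : ∀ x ∈ l, 1 ≤ x := fun x hx => hal x (by simp [hx])
      obtain ⟨r, hr, hre⟩ := ih hl mm
      have e2 : Hb b • vst (a :: l) mm = Fb a • (Hb b • vst l mm)
          - (vst ((b + a) :: l) mm + vst ((b + a) :: l) mm) := by
        rw [vst_cons, ← mul_smul, h1 b a, sub_smul, add_smul, mul_smul,
          show Fb (b + a) • vst l mm = vst ((b + a) :: l) mm from (vst_cons _ l mm).symm]
      have hvmem : vst ((b + a) :: l) mm ∈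
          stateCone vst (a + l.sum + b) (l.length + 1 + mm) := by
        refine stateCone.v_mem ?_ ?_ ?_
        · intro x hx
          rcases List.mem_cons.mp hx with rfl | hx
          · omega
          · exact hl x hx
        · simp only [List.sum_cons] <;> omega
        · simp only [List.length_cons] <;> omega
      refine ⟨Fb a • r + (vst ((b + a) :: l) mm + vst ((b + a) :: l) mm), ?_, ?_⟩
      · simp only [List.sum_cons, List.length_cons]
        exact add_mem
          (hFbmap a ha (l.sum + b) (l.length + mm) _ _ (by omega) (by omega) r hr)
          (add_mem hvmem hvmem)
      · rw [e2]
        have e3 : -(Fb a • (Hb b • vst l mm)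
            - (vst ((b + a) :: l) mm + vst ((b + a) :: l) mm))
            = Fb a • (-(Hb b • vst l mm))
              + (vst ((b + a) :: l) mm + vst ((b + a) :: l) mm) := by
          rw [smul_neg]; abel
        rw [e3, hre, smul_add, smul_comm (Fb a) ((2 : ℂ) * (mm : ℂ)), Fb_swap]
        abel
  -- `E` maps a general state into the (negative of the) cone
  have M2 : ∀ l, (∀ a ∈ l, 1 ≤ a) → ∀ mm,
      -(E • vst l mm) ∈ stateCone vst (l.sum + 1) (l.length + mm - 1) := by
    intro l
    induction l with
    | nil =>
      intro _ mm
      rw [Em mm]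
      match mm with
      | 0 => simpa using zero_mem _
      | 1 => simpa using zero_mem _
      | (k+2) =>
        have e4 : -((-(((k:ℂ)+2) * (((k:ℂ)+2) - 1))) • vst [1] k)
            = ((((k+2)*(k+1) : ℕ) : ℝ) : ℂ) • vst [1] k := by
          push_cast
          module
        have e5 : ((k:ℂ)+2) = (((k+2 : ℕ) : ℂ)) := by push_cast; ring
        rw [show ((k+2 : ℕ) : ℂ) = ((k:ℂ)+2) from by push_cast; ring,
          show (k+2) - 2 = k from rfl, e4]
        refine stateCone.gen_mem (by positivity) (by simp) (by simp) (by simp; omega)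
    | cons a l ih =>
      intro hal mm
      have ha : 1 ≤ a := hal a (by simp)
      have hl : ∀ x ∈ l, 1 ≤ x := fun x hx => hal x (by simp [hx])
      have e2 : E • vst (a :: l) mm = Fb a • (E • vst l mm) + Hb (1 + a) • vst l mm := by
        rw [vst_cons, ← mul_smul, h2 a, add_smul, mul_smul]
      rw [e2, neg_add]
      simp only [List.sum_cons, List.length_cons]
      apply add_mem
      · rw [← smul_neg]
        by_cases h0 : l.length + mm = 0
        · have hl0 : l = [] := List.eq_nil_of_length_eq_zero (by omega)
          have hm0 : mm = 0 := by omega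
          subst hl0; subst hm0
          rw [Em 0]
          simpa using zero_mem _
        · exact hFbmap a ha (l.sum + 1) (l.length + mm - 1) _ _ (by omega) (by omega)
            _ (ih hl mm)
      · obtain ⟨r, hr, hre⟩ := M1' (1 + a) (by omega) l hl mm
        rw [hre]
        apply add_mem
        · match mm with
          | 0 => simpa using zero_mem _
          | (k+1) =>
            rw [show ((2:ℂ) * ((k+1 : ℕ) : ℂ)) = (((2*(k+1) : ℕ) : ℝ) : ℂ) from by
              push_cast; ring]
            refine stateCone.gen_mem (by positivity) ?_ ?_ ?_
            · intro x hx
              rcases List.mem_cons.mp hx with rfl | hx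
              · omega
              · exact hl x hx
            · simp only [List.sum_cons] <;> omega
            · simp only [List.length_cons] <;> omega
        · rw [show a + l.sum + 1 = l.sum + (1 + a) from by omega,
            show l.length + 1 + mm - 1 = l.length + mm from by omega]
          exact hr
  -- `E` on a singleton state: canonical term plus cone remainder
  have M2s : ∀ a mm, 1 ≤ a → 1 ≤ mm → ∃ r ∈ stateCone vst (a + 1) mm,
      -(E • vst [a] mm) = (2 * (mm : ℂ)) • vst [a + 1] (mm - 1) + r := by
    intro a mm ha hm
    have e2 : E • vst [a] mm = Fb a • (E • vst [] mm) + Hb (1 + a) • vst [] mm := by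
      rw [vst_cons, ← mul_smul, h2 a, add_smul, mul_smul]
    refine ⟨((mm : ℂ) * ((mm : ℂ) - 1)) • vst [a, 1] (mm - 2), ?_, ?_⟩
    · match mm, hm with
      | 1, _ => simpa using zero_mem _
      | (k+2), _ =>
        rw [show ((((k+2) : ℕ) : ℂ) * ((((k+2) : ℕ) : ℂ) - 1))
            = ((((k+2)*(k+1) : ℕ) : ℝ) : ℂ) from by push_cast; ring]
        refine stateCone.gen_mem (by positivity) ?_ ?_ ?_
        · intro x hx
          simp only [List.mem_cons, List.mem_singleton] at hx
          rcases hx with rfl | rfl | h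
          · exact ha
          · exact le_rfl
          · simp at h
        · simp only [List.sum_cons, List.sum_nil] <;> omega
        · simp only [List.length_cons, List.length_nil] <;> omega
    · rw [e2, Em mm, HbF (1 + a) (by omega) mm,
        show (1 + a) = (a + 1) from by omega,
        smul_comm (Fb a),
        show Fb a • vst [1] (mm - 2) = vst [a, 1] (mm - 2) from (vst_cons a [1] _).symm]
      module
  -- main induction
  have M3 : ∀ j, 1 ≤ j → j ≤ p → ∃ γ : ℝ, 0 < γ ∧ ∃ r ∈ stateCone vst j (p + 1 - j),
      ((-1 : ℂ)) ^ j • ((E ^ j * Fb 0 ^ (p + 1)) • w)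
        = ((γ : ℝ) : ℂ) • vst [j] (p - j) + r := by
    intro j
    induction j with
    | zero => intro h; exact absurd h (by omega)
    | succ n ih =>
      intro _ hjp
      rcases Nat.eq_zero_or_pos n with rfl | hn
      · -- base case j = 1
        have hppos : (0 : ℝ) < ((p : ℝ) + 1) * p := by
          have : (1 : ℝ) ≤ (p : ℝ) := by exact_mod_cast hp
          nlinarith
        refine ⟨((p : ℝ) + 1) * p, hppos, 0, zero_mem _, ?_⟩
        have e1 : (E ^ 1 * Fb 0 ^ (p + 1)) • w = E • vst [] (p + 1) := by
          rw [pow_one, mul_smul, vst_nil]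
        rw [e1, Em (p + 1), show (p + 1) - 2 = p - 1 from by omega]
        push_cast
        module
      · obtain ⟨γ, hγ, r, hr, hre⟩ := ih hn (by omega)
        have hmge : 1 ≤ p - n := by omega
        obtain ⟨r₁, hr₁, hre₁⟩ := M2s n (p - n) hn hmge
        have hr₂ : -(E • r) ∈ stateCone vst (n + 1) (p - n) := by
          have h := stateCone.map_mem (v := vst)
            (-(DistribMulAction.toLinearMap ℂ W E)) (j := n) (n := p + 1 - n)
            (j' := n + 1) (n' := p - n) ?_ hr
          · exact h
          · intro l mm hl hsum hcnt
            have he : (-(DistribMulAction.toLinearMap ℂ W E)) (vst l mm)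
                = -(E • vst l mm) := by simp; rfl
            rw [he, show n + 1 = l.sum + 1 from by omega,
              show p - n = l.length + mm - 1 from by omega]
            exact M2 l hl mm
        have hγ' : (0 : ℝ) < γ * (2 * ((p - n : ℕ) : ℝ)) := by
          have : (1 : ℝ) ≤ ((p - n : ℕ) : ℝ) := by exact_mod_cast hmge
          nlinarith
        refine ⟨γ * (2 * ((p - n : ℕ) : ℝ)), hγ', ?_⟩
        rw [show p + 1 - (n + 1) = p - n from by omega,
          show p - (n + 1) = p - n - 1 from by omega]
        refine ⟨(γ : ℂ) • r₁ + -(E • r),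
          add_mem (stateCone.smul_mem hγ.le hr₁) hr₂, ?_⟩
        have epow : (E ^ (n + 1) * Fb 0 ^ (p + 1)) • w
            = E • ((E ^ n * Fb 0 ^ (p + 1)) • w) := by
          rw [pow_succ', mul_assoc, mul_smul]
        calc ((-1 : ℂ)) ^ (n + 1) • ((E ^ (n + 1) * Fb 0 ^ (p + 1)) • w)
            = (-1 : ℂ) • (E • (((-1 : ℂ)) ^ n • ((E ^ n * Fb 0 ^ (p + 1)) • w))) := by
              rw [epow, pow_succ, mul_comm, mul_smul, smul_comm E ((-1:ℂ)^n)]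
          _ = (-1 : ℂ) • (E • ((γ : ℂ) • vst [n] (p - n) + r)) := by rw [hre]
          _ = (γ : ℂ) • (-(E • vst [n] (p - n))) + -(E • r) := by
              rw [smul_add, smul_comm E ((γ : ℂ)), neg_one_smul, neg_add, ← smul_neg]
          _ = (γ : ℂ) • ((2 * ((p - n : ℕ) : ℂ)) • vst [n + 1] (p - n - 1) + r₁)
              + -(E • r) := by rw [hre₁]
          _ = ((γ * (2 * ((p - n : ℕ) : ℝ)) : ℝ) : ℂ) • vst [n + 1] (p - n - 1)
              + ((γ : ℂ) • r₁ + -(E • r)) := by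
              rw [smul_add, smul_smul, add_assoc]
              norm_cast
  -- conclusion
  obtain ⟨γ, hγ, r, hr, hre⟩ := M3 p hp le_rfl
  rw [show p + 1 - p = 1 from by omega] at hr
  have hcol : ∀ u ∈ stateCone vst p 1, ∃ c : ℝ, 0 ≤ c ∧ u = (c : ℂ) • vst [p] 0 := by
    intro u hu
    induction hu using AddSubmonoid.closure_induction with
    | mem x hx =>
      obtain ⟨t, ht, l, mm, hl, hsum, hcnt, rfl⟩ := hx
      rcases l with _ | ⟨a, l'⟩
      · exfalso; simp at hsum; omega
      · have hl' : l' = [] := List.eq_nil_of_length_eq_zero (by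
          simp only [List.length_cons] at hcnt; omega)
        have hm0 : mm = 0 := by simp only [List.length_cons] at hcnt; omega
        subst hl'; subst hm0
        have hap : a = p := by simpa using hsum
        subst hap
        exact ⟨t, ht, rfl⟩
    | zero => exact ⟨0, le_rfl, by simp⟩
    | add x y hx hy ihx ihy =>
      obtain ⟨c1, hc1, rfl⟩ := ihx
      obtain ⟨c2, hc2, rfl⟩ := ihy
      exact ⟨c1 + c2, by positivity, by push_cast; module⟩
  obtain ⟨c, hc, rfl⟩ := hcol r hr
  have hvp : vst [p] 0 = Fb p • w := by simp [hvst]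
  have hne : ((γ + c : ℝ) : ℂ) ≠ 0 := by
    rw [Complex.ofReal_ne_zero]
    nlinarith
  refine ⟨((γ + c : ℝ) : ℂ)⁻¹ * (-1) ^ p, ?_⟩
  have hkey : ((γ + c : ℝ) : ℂ) • (Fb p • w)
      = (-1 : ℂ) ^ p • ((E ^ p * Fb 0 ^ (p + 1)) • w) := by
    rw [← hvp, hre, show p - p = 0 from by omega, ← add_smul]
    norm_cast
  calc Fb p • w = ((γ + c : ℝ) : ℂ)⁻¹ • (((γ + c : ℝ) : ℂ) • (Fb p • w)) := by
        rw [smul_smul, inv_mul_cancel₀ hne, one_smul]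
    _ = (((γ + c : ℝ) : ℂ)⁻¹ * (-1) ^ p) • ((E ^ p * Fb 0 ^ (p + 1)) • w) := by
        rw [hkey, smul_smul]


section WeylAux

variable {L : Type} [LieRing L] [LieAlgebra ℂ L] {Φ ιI : Type}
variable (ep em hc : Φ → L) (simple : ιI → Φ) (lam : Module.Dual ℂ L) (lamNat : Φ → ℕ)

lemma smul_wLam (u : UCA L) :
    u • wLam ep em hc simple lam lamNat =
      Submodule.Quotient.mk (p := Submodule.span (UCA L) (weylGens ep em hc simple lam lamNat))
        u := by
  rw [wLam, ← Submodule.Quotient.mk_smul, smul_eq_mul, mul_one]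

lemma ep_smul_wLam (α : Φ) (s : ℕ) :
    xt (ep α) s • wLam ep em hc simple lam lamNat = 0 := by
  rw [smul_wLam, Submodule.Quotient.mk_eq_zero]
  refine Submodule.subset_span (Or.inl (Or.inl ?_))
  exact ⟨ep α, Submodule.subset_span ⟨α, rfl⟩, s, rfl⟩

lemma hc_smul_wLam (α : Φ) (s : ℕ) (hs : s ≠ 0) :
    xt (hc α) s • wLam ep em hc simple lam lamNat = 0 := by
  rw [smul_wLam, Submodule.Quotient.mk_eq_zero]
  refine Submodule.subset_span (Or.inl (Or.inr ?_))
  exact ⟨hc α, Submodule.subset_span ⟨α, rfl⟩, s, by rw [if_neg hs, zero_smul, sub_zero]⟩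

/-- The key special case: `x_α⁻ ⊗ t^p` applied to `w_λ` is, up to a scalar, the image of
`(x_α⁺ ⊗ t)^p (x_α⁻ ⊗ 1)^{p+1} w_λ`. -/
lemma key_step (α : Φ) (ht : IsSl2Triple (hc α) (ep α) (em α)) (p : ℕ) (hp : 1 ≤ p) :
    ∃ c : ℂ, xt (em α) p • wLam ep em hc simple lam lamNat
      = c • ((xt (ep α) 1 ^ p * xt (em α) 0 ^ (p + 1)) •
          wLam ep em hc simple lam lamNat) := by
  refine core_lemma (xt (ep α) 1) (fun a => xt (em α) a) (fun a => xt (hc α) a)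
    (wLam ep em hc simple lam lamNat) ?_ ?_ ?_ ?_ ?_ p hp
  · intro b c
    rw [xt_mul (hc α) (em α) b c, ht.lie_h_f_nsmul, two_smul, xt_neg, xt_add,
      sub_eq_add_neg]
  · intro b
    rw [xt_mul (ep α) (em α) 1 b, ht.lie_e_f]
  · intro a b
    rw [xt_mul (em α) (em α) a b, lie_self, xt_zero', add_zero]
  · intro s hs
    exact hc_smul_wLam ep em hc simple lam lamNat α s (by omega)
  · exact ep_smul_wLam ep em hc simple lam lamNat α 1

end WeylAux

/-- Corollary to Proposition `third`.  If `|ξ^α| > 0` and `s_α` is the number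
of nonzero parts of `ξ^α`, then `(x_α⁻ ⊗ t^p) v_ξ = 0` for all `p ≥ s_α`. -/
theorem xt_em_smul_vXi_eq_zero_of_numParts_le
    {L : Type} [LieRing L] [LieAlgebra ℂ L] {Φ ιI : Type}
    (ep em hc : Φ → L) (simple : ιI → Φ)
    (lam : Module.Dual ℂ L) (lamNat : Φ → ℕ)
    -- the elements `x_α⁺, x_α⁻, h_α` form an `sl₂`-triple for each positive root `α`
    (htriple : ∀ α, IsSl2Triple (hc α) (ep α) (em α))
    -- `λ(h_α) = lamNat α` is a non-negative integer for every `α ∈ R⁺`, i.e. `λ ∈ P⁺`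
    (hlam : ∀ α, lam (hc α) = (lamNat α : ℂ))
    -- `λ ≠ 0`
    (hlam_ne : lam ≠ 0)
    -- `ξ` is a `λ`-compatible tuple of partitions
    (ξ : Φ → ℕ → ℕ) (hcompat : IsCompatible lamNat ξ)
    -- `α` is a positive root with `|ξ^α| > 0`
    (α : Φ) (hα : 0 < ∑ᶠ j, ξ α j)
    -- `s_α` is the number of nonzero parts of `ξ^α`
    (sα : ℕ) (hsα₁ : ∀ j, j < sα → 0 < ξ α j) (hsα₂ : ∀ j, sα ≤ j → ξ α j = 0) :
    ∀ p, sα ≤ p → xt (em α) p • vXi ep em hc simple lam lamNat ξ = 0 := by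
  have hs1 : 1 ≤ sα := by
    by_contra h
    have hall : ∀ j, ξ α j = 0 := fun j => hsα₂ j (by omega)
    rw [finsum_eq_zero_of_forall_eq_zero hall] at hα
    exact lt_irrefl 0 hα
  have htail : tailSum (ξ α) sα = 0 := by
    refine finsum_mem_of_eqOn_zero ?_
    intro j hj
    exact hsα₂ j hj
  have h0 : xt (hc α) 1 • vXi ep em hc simple lam lamNat ξ = 0 := by
    rw [vXi, ← Submodule.Quotient.mk_smul,
      hc_smul_wLam ep em hc simple lam lamNat α 1 one_ne_zero,
      Submodule.Quotient.mk_zero]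
  intro p hp
  induction p, hp using Nat.le_induction with
  | base =>
    obtain ⟨c, hcw⟩ := key_step ep em hc simple lam lamNat α (htriple α) sα hs1
    have hmem : (xt (ep α) 1 ^ sα * xt (em α) 0 ^ (sα + 1)) •
        wLam ep em hc simple lam lamNat ∈ xiGens ep em hc simple lam lamNat ξ :=
      ⟨α, sα, 1, hs1, le_rfl, ⟨sα, hs1, by rw [htail]; omega⟩, rfl⟩
    rw [vXi, ← Submodule.Quotient.mk_smul, hcw, Submodule.Quotient.mk_smul,
      (Submodule.Quotient.mk_eq_zero _).mpr (Submodule.subset_span hmem), smul_zero]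
  | succ q hq ih =>
    have hcomm : xt (hc α) 1 * xt (em α) q
        = xt (em α) q * xt (hc α) 1 - (xt (em α) (1 + q) + xt (em α) (1 + q)) := by
      rw [xt_mul (hc α) (em α) 1 q, (htriple α).lie_h_f_nsmul, two_smul, xt_neg, xt_add,
        sub_eq_add_neg]
    have hXX : xt (em α) (1 + q) • vXi ep em hc simple lam lamNat ξ
        + xt (em α) (1 + q) • vXi ep em hc simple lam lamNat ξ = 0 := by
      have hc1 := congrArg
        (fun u : UCA L => u • vXi ep em hc simple lam lamNat ξ) hcomm
      simp only [mul_smul, sub_smul, add_smul] at hc1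
      rw [ih, h0, smul_zero, smul_zero, zero_sub] at hc1
      have := hc1.symm
      rw [neg_eq_zero] at this
      exact this
    have h2 : (2 : ℂ) • (xt (em α) (1 + q) • vXi ep em hc simple lam lamNat ξ) = 0 := by
      rw [two_smul]; exact hXX
    have h3 := (smul_eq_zero.mp h2).resolve_left two_ne_zero
    rwa [show 1 + q = q + 1 from by omega] at h3

end
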